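/- For all complex numbers z with |z| ≤ 1, Σ_{m=0}^{∞} e_{O,m} z^m = Π_p (1 + (z−1)/(p²(p+1))), the product running over all primes p. -/

import Mathlib

open scoped BigOperators

/-- A positive integer is *powerful* if every prime dividing it divides it with
multiplicity at least `2`. -/
def Powerful (f : ℕ) : Prop := 0 < f ∧ ∀ p : ℕ, p.Prime → p ∣ f → p ^ 2 ∣ f

/-- `ω_O(n)`: the number of primes dividing `n` with odd multiplicity exceeding `1`. -/
def omegaO (n : ℕ) : ℕ :=
  (n.primeFactors.filter fun p => Odd (n.factorization p) ∧ 1 < n.factorization p).card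

/-- The density `e_{O,m}` of integers `n` with `ω_O(n) = m`. -/
noncomputable def eOm (m : ℕ) : ℝ :=
  6 / Real.pi ^ 2 *
    ∑' f : {f : ℕ // Powerful f ∧ omegaO f = m},
      ((f : ℕ) : ℝ)⁻¹ * ∏ p ∈ (f : ℕ).primeFactors, (1 + 1 / (p : ℝ))⁻¹

/-! ### Auxiliary definitions and lemmas -/

noncomputable instance : DecidablePred Powerful := fun _ => Classical.propDecidable _

/-- The multiplicative function whose sum is the generating function. -/
noncomputable def aFun (z : ℂ) (n : ℕ) : ℂ :=
  if Powerful n then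
    ((n : ℂ))⁻¹ * (∏ p ∈ n.primeFactors, (1 + 1 / (p : ℂ))⁻¹) * z ^ omegaO n
  else 0

lemma powerful_one : Powerful 1 :=
  ⟨one_pos, fun p hp hd => absurd (Nat.dvd_one.mp hd) hp.one_lt.ne'⟩

lemma aFun_zero (z : ℂ) : aFun z 0 = 0 := by
  rw [aFun, if_neg]
  rintro ⟨h, -⟩
  exact lt_irrefl 0 h

lemma omegaO_one : omegaO 1 = 0 := by
  simp [omegaO]

lemma aFun_one (z : ℂ) : aFun z 1 = 1 := by
  rw [aFun, if_pos powerful_one]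
  simp [omegaO_one]

lemma powerful_mul_iff {m n : ℕ} (h : Nat.Coprime m n) :
    Powerful (m * n) ↔ Powerful m ∧ Powerful n := by
  constructor
  · rintro ⟨hpos, hdvd⟩
    have hm : 0 < m := Nat.pos_of_mul_pos_left (by rwa [mul_comm] at hpos)
    have hn : 0 < n := Nat.pos_of_mul_pos_left hpos
    refine ⟨⟨hm, fun p hp hpd => ?_⟩, ⟨hn, fun p hp hpd => ?_⟩⟩
    · have h1 : p ^ 2 ∣ m * n := hdvd p hp (hpd.mul_right n)
      have h2 : Nat.Coprime (p ^ 2) n :=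
        Nat.Coprime.pow_left 2 ((Nat.Coprime.coprime_dvd_left hpd h))
      exact (Nat.Coprime.dvd_of_dvd_mul_right h2 h1)
    · have h1 : p ^ 2 ∣ m * n := hdvd p hp (hpd.mul_left m)
      have h2 : Nat.Coprime (p ^ 2) m :=
        Nat.Coprime.pow_left 2 ((Nat.Coprime.coprime_dvd_left hpd h.symm))
      exact (Nat.Coprime.dvd_of_dvd_mul_left h2 h1)
  · rintro ⟨⟨hm, hdm⟩, ⟨hn, hdn⟩⟩
    refine ⟨Nat.mul_pos hm hn, fun p hp hd => ?_⟩
    rcases hp.dvd_mul.mp hd with h' | h'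
    · exact dvd_mul_of_dvd_left (hdm p hp h') n
    · exact dvd_mul_of_dvd_right (hdn p hp h') m

lemma omegaO_mul {m n : ℕ} (h : Nat.Coprime m n) (hm : m ≠ 0) (hn : n ≠ 0) :
    omegaO (m * n) = omegaO m + omegaO n := by
  classical
  have key : ∀ {a b : ℕ}, a ≠ 0 → b ≠ 0 → Nat.Coprime a b →
      ∀ p ∈ a.primeFactors, (a * b).factorization p = a.factorization p := by
    intro a b ha hb hab p hp
    have hpn : ¬ p ∣ b := fun hdvd =>
      (Nat.prime_of_mem_primeFactors hp).one_lt.ne'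
        ((Nat.Coprime.coprime_dvd_left (Nat.dvd_of_mem_primeFactors hp) hab).eq_one_of_dvd hdvd)
    rw [Nat.factorization_mul ha hb, Finsupp.add_apply,
      Nat.factorization_eq_zero_of_not_dvd hpn, add_zero]
  rw [omegaO, omegaO, omegaO, Nat.primeFactors_mul hm hn, Finset.filter_union,
    Finset.card_union_of_disjoint
      (Disjoint.mono (Finset.filter_subset _ _) (Finset.filter_subset _ _)
        (Nat.Coprime.disjoint_primeFactors h))]
  congr 1
  · exact congrArg Finset.card <| Finset.filter_congr fun p hp => by rw [key hm hn h p hp]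
  · exact congrArg Finset.card <| Finset.filter_congr fun p hp => by
      rw [mul_comm m n, key hn hm h.symm p hp]

lemma aFun_mul (z : ℂ) {m n : ℕ} (h : Nat.Coprime m n) :
    aFun z (m * n) = aFun z m * aFun z n := by
  by_cases H : Powerful (m * n)
  · obtain ⟨hm, hn⟩ := (powerful_mul_iff h).mp H
    have hm0 : m ≠ 0 := hm.1.ne'
    have hn0 : n ≠ 0 := hn.1.ne'
    rw [aFun, aFun, aFun, if_pos H, if_pos hm, if_pos hn,
      omegaO_mul h hm0 hn0, Nat.primeFactors_mul hm0 hn0,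
      Finset.prod_union (Nat.Coprime.disjoint_primeFactors h), Nat.cast_mul, mul_inv, pow_add]
    ring
  · rw [aFun, if_neg H]
    rcases not_and_or.mp (fun hc => H ((powerful_mul_iff h).mpr hc)) with h' | h'
    · rw [show aFun z m = 0 by rw [aFun, if_neg h'], zero_mul]
    · rw [show aFun z n = 0 by rw [aFun, if_neg h'], mul_zero]

open Classical in
noncomputable def sqPart (n : ℕ) : ℕ :=
  ∏ p ∈ n.primeFactors, p ^ (n.factorization p / 2 - if Odd (n.factorization p) then 1 else 0)

open Classical in
noncomputable def cbPart (n : ℕ) : ℕ :=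
  ∏ p ∈ n.primeFactors.filter (fun p => Odd (n.factorization p)), p

lemma powerful_sq_cb {n : ℕ} (hn : Powerful n) : sqPart n ^ 2 * cbPart n ^ 3 = n := by
  classical
  have h0 : n ≠ 0 := hn.1.ne'
  conv_rhs => rw [← Nat.factorization_prod_pow_eq_self h0]
  rw [Finsupp.prod, Nat.support_factorization]
  rw [sqPart, cbPart, ← Finset.prod_pow, ← Finset.prod_pow, Finset.prod_filter,
    ← Finset.prod_mul_distrib]
  refine Finset.prod_congr rfl fun p hp => ?_
  have hpp := Nat.prime_of_mem_primeFactors hp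
  have h2 : 2 ≤ n.factorization p := by
    rw [← Nat.Prime.pow_dvd_iff_le_factorization hpp h0]
    exact hn.2 p hpp (Nat.dvd_of_mem_primeFactors hp)
  by_cases ho : Odd (n.factorization p)
  · rw [if_pos ho, if_pos ho, ← pow_mul, ← pow_add]
    have hmod := Nat.odd_iff.mp ho
    congr 1
    omega
  · rw [if_neg ho, if_neg ho, mul_one, ← pow_mul]
    have hmod := Nat.even_iff.mp (Nat.not_odd_iff_even.mp ho)
    congr 1
    omega

lemma summable_aux : Summable (fun n : ℕ => if Powerful n then ((n : ℝ))⁻¹ else 0) := by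
  classical
  have hs2 : Summable (fun a : ℕ => ((a : ℝ) ^ 2)⁻¹) :=
    Real.summable_nat_pow_inv.mpr one_lt_two
  have hs3 : Summable (fun b : ℕ => ((b : ℝ) ^ 3)⁻¹) :=
    Real.summable_nat_pow_inv.mpr (by norm_num)
  have hh : Summable (fun x : ℕ × ℕ => ((x.1 : ℝ) ^ 2)⁻¹ * ((x.2 : ℝ) ^ 3)⁻¹) :=
    hs2.mul_of_nonneg hs3 (fun a => by positivity) (fun b => by positivity)
  refine summable_of_sum_le (c := ∑' x : ℕ × ℕ, ((x.1 : ℝ) ^ 2)⁻¹ * ((x.2 : ℝ) ^ 3)⁻¹)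
    (fun n => ?_) (fun u => ?_)
  · rw [Pi.zero_apply]
    dsimp only
    split
    · positivity
    · exact le_refl 0
  · calc ∑ n ∈ u, (if Powerful n then ((n : ℝ))⁻¹ else 0)
        = ∑ n ∈ u.filter Powerful, ((n : ℝ))⁻¹ := (Finset.sum_filter _ _).symm
      _ = ∑ n ∈ u.filter Powerful,
            (((sqPart n : ℝ)) ^ 2)⁻¹ * (((cbPart n : ℝ)) ^ 3)⁻¹ := by
          refine Finset.sum_congr rfl fun n hn => ?_
          have hnp : Powerful n := (Finset.mem_filter.mp hn).2
          have hcast : ((sqPart n : ℝ)) ^ 2 * ((cbPart n : ℝ)) ^ 3 = (n : ℝ) := by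
            exact_mod_cast congrArg (Nat.cast : ℕ → ℝ) (powerful_sq_cb hnp)
          rw [← mul_inv, hcast]
      _ = ∑ x ∈ (u.filter Powerful).image (fun n => (sqPart n, cbPart n)),
            ((x.1 : ℝ) ^ 2)⁻¹ * ((x.2 : ℝ) ^ 3)⁻¹ := by
          have hinj : ∀ x ∈ u.filter Powerful, ∀ y ∈ u.filter Powerful,
              (fun n => (sqPart n, cbPart n)) x = (fun n => (sqPart n, cbPart n)) y → x = y := by
            intro x hx y hy hxy
            have hx' : Powerful x := (Finset.mem_filter.mp hx).2
            have hy' : Powerful y := (Finset.mem_filter.mp hy).2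
            have h1 := powerful_sq_cb hx'
            have h2 := powerful_sq_cb hy'
            simp only [Prod.mk.injEq] at hxy
            rw [← h1, ← h2, hxy.1, hxy.2]
          rw [Finset.sum_image hinj]
      _ ≤ ∑' x : ℕ × ℕ, ((x.1 : ℝ) ^ 2)⁻¹ * ((x.2 : ℝ) ^ 3)⁻¹ :=
          Summable.sum_le_tsum _ (fun x _ => by positivity) hh

noncomputable def rTerm (n : ℕ) : ℝ :=
  (n : ℝ)⁻¹ * ∏ p ∈ n.primeFactors, (1 + 1 / (p : ℝ))⁻¹

lemma rTerm_nonneg (n : ℕ) : 0 ≤ rTerm n := by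
  unfold rTerm
  positivity

lemma rTerm_le (n : ℕ) : rTerm n ≤ (n : ℝ)⁻¹ := by
  unfold rTerm
  have h1 : ∏ p ∈ n.primeFactors, (1 + 1 / (p : ℝ))⁻¹ ≤ 1 := by
    refine Finset.prod_le_one (fun p _ => by positivity) (fun p _ => ?_)
    rw [inv_le_one_iff₀]
    right
    have : (0 : ℝ) ≤ 1 / (p : ℝ) := by positivity
    linarith
  have h2 : (0 : ℝ) ≤ (n : ℝ)⁻¹ := by positivity
  calc (n : ℝ)⁻¹ * ∏ p ∈ n.primeFactors, (1 + 1 / (p : ℝ))⁻¹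
      ≤ (n : ℝ)⁻¹ * 1 := by
        exact mul_le_mul_of_nonneg_left h1 h2
    _ = (n : ℝ)⁻¹ := mul_one _

lemma norm_aFun_le {z : ℂ} (hz : ‖z‖ ≤ 1) (n : ℕ) :
    ‖aFun z n‖ ≤ if Powerful n then rTerm n else 0 := by
  by_cases H : Powerful n
  · rw [if_pos H, aFun, if_pos H]
    have hnorm : ‖((n : ℂ))⁻¹ * (∏ p ∈ n.primeFactors, (1 + 1 / (p : ℂ))⁻¹) * z ^ omegaO n‖
        = rTerm n * ‖z‖ ^ omegaO n := by
      rw [norm_mul, norm_mul, norm_pow, norm_inv, Complex.norm_natCast, rTerm]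
      congr 2
      rw [norm_prod]
      refine Finset.prod_congr rfl fun p _ => ?_
      rw [norm_inv]
      congr 1
      have hcast : (1 : ℂ) + 1 / (p : ℂ) = ((1 + 1 / (p : ℝ) : ℝ) : ℂ) := by push_cast; ring
      rw [hcast, Complex.norm_real]
      exact Real.norm_of_nonneg (by positivity)
    rw [hnorm]
    calc rTerm n * ‖z‖ ^ omegaO n ≤ rTerm n * 1 :=
          mul_le_mul_of_nonneg_left (pow_le_one₀ (norm_nonneg z) hz) (rTerm_nonneg n)
      _ = rTerm n := mul_one _
  · rw [if_neg H, aFun, if_neg H, norm_zero]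

lemma summable_norm_aFun {z : ℂ} (hz : ‖z‖ ≤ 1) : Summable (fun n => ‖aFun z n‖) := by
  refine Summable.of_nonneg_of_le (fun n => norm_nonneg _) (norm_aFun_le hz) ?_
  refine Summable.of_nonneg_of_le (fun n => ?_) (fun n => ?_) summable_aux
  · split
    · exact rTerm_nonneg _
    · exact le_refl 0
  · split
    · exact rTerm_le n
    · exact le_refl 0

lemma powerful_pow_of_two_le {p e : ℕ} (hp : p.Prime) (he : 2 ≤ e) : Powerful (p ^ e) := by
  refine ⟨Nat.pow_pos hp.pos, fun q hq hqd => ?_⟩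
  have hqp : q = p := (Nat.prime_dvd_prime_iff_eq hq hp).mp (hq.dvd_of_dvd_pow hqd)
  subst hqp
  exact pow_dvd_pow q he

lemma not_powerful_prime {p : ℕ} (hp : p.Prime) : ¬ Powerful p := by
  rintro ⟨-, h⟩
  have h1 := Nat.le_of_dvd hp.pos (h p hp dvd_rfl)
  have h2 := hp.two_le
  nlinarith

lemma aFun_prime_pow {p : ℕ} (hp : p.Prime) {e : ℕ} (he : 2 ≤ e) (z : ℂ) :
    aFun z (p ^ e) =
      (1 + 1 / (p : ℂ))⁻¹ * ((p : ℂ)⁻¹) ^ e * (if Odd e then z else 1) := by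
  classical
  have he0 : e ≠ 0 := by omega
  have hω : omegaO (p ^ e) = if Odd e then 1 else 0 := by
    rw [omegaO, Nat.primeFactors_prime_pow he0 hp]
    have hfac : (p ^ e).factorization p = e := by
      rw [hp.factorization_pow, Finsupp.single_eq_same]
    rw [Finset.filter_singleton]
    by_cases ho : Odd e
    · rw [if_pos ⟨by rwa [hfac], by rw [hfac]; omega⟩, if_pos ho, Finset.card_singleton]
    · rw [if_neg (by rw [hfac]; exact fun hc => ho hc.1), if_neg ho, Finset.card_empty]
  rw [aFun, if_pos (powerful_pow_of_two_le hp he), Nat.primeFactors_prime_pow he0 hp,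
    Finset.prod_singleton, hω]
  have hcast : ((p ^ e : ℕ) : ℂ)⁻¹ = ((p : ℂ)⁻¹) ^ e := by
    push_cast
    rw [inv_pow]
  rw [hcast]
  by_cases ho : Odd e
  · rw [if_pos ho, if_pos ho, pow_one]
    ring
  · rw [if_neg ho, if_neg ho, pow_zero]
    ring

lemma hasSum_local {p : ℕ} (hp : p.Prime) (z : ℂ) :
    HasSum (fun e => aFun z (p ^ e))
      (((1 + 1 / (p : ℂ))⁻¹ * ((p : ℂ)⁻¹) ^ 2 * (1 - ((p : ℂ)⁻¹) ^ 2)⁻¹ +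
        (1 + 1 / (p : ℂ))⁻¹ * z * ((p : ℂ)⁻¹) ^ 3 * (1 - ((p : ℂ)⁻¹) ^ 2)⁻¹) + 1) := by
  set c : ℂ := (1 + 1 / (p : ℂ))⁻¹ with hc
  set q : ℂ := (p : ℂ)⁻¹ with hqdef
  have hqnorm : ‖q‖ < 1 := by
    rw [hqdef, norm_inv, Complex.norm_natCast]
    rw [inv_lt_one_iff₀]
    right
    exact_mod_cast hp.one_lt
  have hrnorm : ‖q ^ 2‖ < 1 := by
    rw [norm_pow]
    exact pow_lt_one₀ (norm_nonneg q) hqnorm (by norm_num)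
  have hgeo : HasSum (fun k : ℕ => (q ^ 2) ^ k) (1 - q ^ 2)⁻¹ :=
    hasSum_geometric_of_norm_lt_one hrnorm
  have heven : HasSum (fun k => aFun z (p ^ (2 * k + 2))) (c * q ^ 2 * (1 - q ^ 2)⁻¹) := by
    have h1 := hgeo.mul_left (c * q ^ 2)
    have hfun : (fun k : ℕ => c * q ^ 2 * (q ^ 2) ^ k)
        = fun k => aFun z (p ^ (2 * k + 2)) := by
      funext k
      rw [aFun_prime_pow hp (by omega) z, if_neg (by rw [Nat.odd_iff]; omega)]
      rw [mul_one, ← hqdef, ← hc]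
      rw [show (2 * k + 2) = 2 + k * 2 by ring, pow_add, pow_mul]
      ring
    rwa [hfun] at h1
  have hodd : HasSum (fun k => aFun z (p ^ (2 * k + 3))) (c * z * q ^ 3 * (1 - q ^ 2)⁻¹) := by
    have h1 := hgeo.mul_left (c * z * q ^ 3)
    have hfun : (fun k : ℕ => c * z * q ^ 3 * (q ^ 2) ^ k)
        = fun k => aFun z (p ^ (2 * k + 3)) := by
      funext k
      rw [aFun_prime_pow hp (by omega) z, if_pos (by rw [Nat.odd_iff]; omega)]
      rw [← hqdef, ← hc]
      rw [show (2 * k + 3) = 3 + k * 2 by ring, pow_add, pow_mul]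
      ring
    rwa [hfun] at h1
  have h2 : HasSum (fun k => aFun z (p ^ (k + 2)))
      (c * q ^ 2 * (1 - q ^ 2)⁻¹ + c * z * q ^ 3 * (1 - q ^ 2)⁻¹) := by
    refine HasSum.even_add_odd ?_ ?_
    · exact heven
    · have : ∀ k : ℕ, 2 * k + 1 + 2 = 2 * k + 3 := fun k => by ring
      simpa only [this] using hodd
  have h3 := (hasSum_nat_add_iff (f := fun e => aFun z (p ^ e)) 2).mp h2
  have hrange : ∑ i ∈ Finset.range 2, aFun z (p ^ i) = 1 := by
    rw [Finset.sum_range_succ, Finset.sum_range_one, pow_zero, pow_one, aFun_one,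
      aFun, if_neg (not_powerful_prime hp), add_zero]
  rw [hrange] at h3
  exact h3

lemma local_value {p : ℕ} (hp : p.Prime) (z : ℂ) :
    (1 - (((p : ℂ)) ^ 2)⁻¹) *
      (((1 + 1 / (p : ℂ))⁻¹ * ((p : ℂ)⁻¹) ^ 2 * (1 - ((p : ℂ)⁻¹) ^ 2)⁻¹ +
        (1 + 1 / (p : ℂ))⁻¹ * z * ((p : ℂ)⁻¹) ^ 3 * (1 - ((p : ℂ)⁻¹) ^ 2)⁻¹) + 1) =
      1 + (z - 1) / ((p : ℂ) ^ 2 * ((p : ℂ) + 1)) := by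
  have hx0 : (p : ℂ) ≠ 0 := Nat.cast_ne_zero.mpr hp.pos.ne'
  have hx1 : (p : ℂ) - 1 ≠ 0 := by
    rw [sub_ne_zero]
    exact_mod_cast hp.one_lt.ne'
  have hx2 : (p : ℂ) + 1 ≠ 0 := by
    have h' : ((p + 1 : ℕ) : ℂ) ≠ 0 := Nat.cast_ne_zero.mpr (by omega)
    push_cast at h'
    exact h'
  have hsq : (p : ℂ) ^ 2 - 1 ≠ 0 := by
    intro hcon
    exact mul_ne_zero hx1 hx2 (by linear_combination hcon)
  have hq : 1 - ((p : ℂ)⁻¹) ^ 2 ≠ 0 := by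
    rw [inv_pow, sub_ne_zero]
    intro hcon
    apply hsq
    rw [← inv_inv ((p : ℂ) ^ 2), ← hcon, inv_one, sub_self]
  have hq' : 1 - ((p : ℂ) ^ 2)⁻¹ ≠ 0 := by
    rwa [inv_pow] at hq
  have hc : (1 : ℂ) + 1 / (p : ℂ) ≠ 0 := by
    rw [show (1 : ℂ) + 1 / (p : ℂ) = ((p : ℂ) + 1) / (p : ℂ) by field_simp]
    exact div_ne_zero hx2 hx0
  set x : ℂ := (p : ℂ) with hxdef
  simp only [inv_pow]
  rw [show (1 : ℂ) - (x ^ 2)⁻¹ = ((x - 1) * (x + 1)) / x ^ 2 by field_simp; ring,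
    show (1 : ℂ) + 1 / x = (x + 1) / x by field_simp,
    inv_div, inv_div]
  field_simp
  have hC : ((x + 1) * x ^ 2 * ((x - 1) * (x + 1)) * ((x + 1) * x ^ 3 * ((x - 1) * (x + 1)))) ≠ 0 := by
    have h3 : x ^ 2 ≠ 0 := pow_ne_zero _ hx0
    have h4 : x ^ 3 ≠ 0 := pow_ne_zero _ hx0
    exact mul_ne_zero (mul_ne_zero (mul_ne_zero hx2 h3) (mul_ne_zero hx1 hx2))
      (mul_ne_zero (mul_ne_zero hx2 h4) (mul_ne_zero hx1 hx2))
  ring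

lemma hasProd_inv {ι : Type*} {f : ι → ℂ} {a : ℂ} (h : HasProd f a) (ha : a ≠ 0) :
    HasProd (fun i => (f i)⁻¹) a⁻¹ := by
  have h' : Filter.Tendsto (fun s : Finset ι => (∏ i ∈ s, f i)⁻¹)
      Filter.atTop (nhds a⁻¹) := Filter.Tendsto.inv₀ h ha
  exact h.inv₀ ha

lemma hasProd_mul {ι : Type*} {f g : ι → ℂ} {a b : ℂ} (hf : HasProd f a) (hg : HasProd g b) :
    HasProd (fun i => f i * g i) (a * b) := by
  have h' : Filter.Tendsto (fun s : Finset ι => (∏ i ∈ s, f i) * ∏ i ∈ s, g i)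
      Filter.atTop (nhds (a * b)) := Filter.Tendsto.mul hf hg
  exact hf.mul hg

lemma hasProd_one_sub :
    HasProd (fun p : Nat.Primes => 1 - (((p : ℕ) : ℂ) ^ 2)⁻¹) (riemannZeta 2)⁻¹ := by
  have h := riemannZeta_eulerProduct_hasProd (s := 2) (by norm_num)
  have hz : riemannZeta 2 ≠ 0 := by
    rw [riemannZeta_two]
    exact div_ne_zero (pow_ne_zero 2 (Complex.ofReal_ne_zero.mpr Real.pi_ne_zero)) (by norm_num)
  have h2 := hasProd_inv h hz
  simp only [inv_inv] at h2
  have hfun : (fun p : Nat.Primes => 1 - (((p : ℕ) : ℂ) ^ 2)⁻¹)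
      = fun p : Nat.Primes => 1 - ((p : ℕ) : ℂ) ^ (-(2 : ℂ)) := by
    funext p
    congr 1
    rw [show (-(2 : ℂ)) = -(((2 : ℕ) : ℂ)) by norm_num, Complex.cpow_neg,
      Complex.cpow_natCast]
  rw [hfun]
  exact h2

theorem eOm_generating_function (z : ℂ) (hz : ‖z‖ ≤ 1) :
    ∃ P : ℂ,
      HasProd (fun p : Nat.Primes =>
        1 + (z - 1) / (((p : ℕ) : ℂ) ^ 2 * (((p : ℕ) : ℂ) + 1))) P ∧
      HasSum (fun m : ℕ => (eOm m : ℂ) * z ^ m) P := by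
  have hπ : (Real.pi : ℂ) ≠ 0 := Complex.ofReal_ne_zero.mpr Real.pi_ne_zero
  have hsummable : Summable (fun n => ‖aFun z n‖) := summable_norm_aFun hz
  have hEuler := EulerProduct.eulerProduct_hasProd (f := aFun z) (aFun_one z)
    (fun {m n} h => aFun_mul z h) hsummable (aFun_zero z)
  refine ⟨(riemannZeta 2)⁻¹ * ∑' n, aFun z n, ?_, ?_⟩
  · have hfinal := hasProd_mul hasProd_one_sub hEuler
    have hfun : (fun p : Nat.Primes =>
        1 + (z - 1) / (((p : ℕ) : ℂ) ^ 2 * (((p : ℕ) : ℂ) + 1)))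
        = fun p : Nat.Primes =>
          (1 - (((p : ℕ) : ℂ) ^ 2)⁻¹) * ∑' e : ℕ, aFun z ((p : ℕ) ^ e) := by
      funext p
      rw [(hasSum_local p.2 z).tsum_eq]
      exact (local_value p.2 z).symm
    rw [hfun]
    exact hfinal
  · have hsum : HasSum (aFun z) (∑' n, aFun z n) := hsummable.of_norm.hasSum
    have hfib := hsum.tsum_fiberwise omegaO
    have hmul := hfib.mul_left ((riemannZeta 2)⁻¹)
    have key : ∀ m : ℕ, (riemannZeta 2)⁻¹ * ∑' n : omegaO ⁻¹' {m}, aFun z n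
        = (eOm m : ℂ) * z ^ m := by
      intro m
      have h1 : ∑' n : omegaO ⁻¹' {m}, aFun z n
          = ((∑' f : {f : ℕ // Powerful f ∧ omegaO f = m},
              ((f : ℕ) : ℝ)⁻¹ * ∏ p ∈ (f : ℕ).primeFactors, (1 + 1 / (p : ℝ))⁻¹ : ℝ) : ℂ)
            * z ^ m := by
        have hinj : Function.Injective
            (fun f : {f : ℕ // Powerful f ∧ omegaO f = m} =>
              (⟨(f : ℕ), by simp [Set.mem_preimage, f.2.2]⟩ : omegaO ⁻¹' {m})) := by
          intro a b hab
          simp only [Subtype.mk.injEq] at hab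
          exact Subtype.ext hab
        have hsupp : Function.support (fun n : omegaO ⁻¹' {m} => aFun z (n : ℕ))
            ⊆ Set.range (fun f : {f : ℕ // Powerful f ∧ omegaO f = m} =>
              (⟨(f : ℕ), by simp [Set.mem_preimage, f.2.2]⟩ : omegaO ⁻¹' {m})) := by
          intro x hx
          have hpow : Powerful (x : ℕ) := by
            by_contra hnp
            apply hx
            show aFun z (x : ℕ) = 0
            rw [aFun, if_neg hnp]
          have hm : omegaO (x : ℕ) = m := Set.mem_singleton_iff.mp x.2
          exact ⟨⟨(x : ℕ), hpow, hm⟩, Subtype.ext rfl⟩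
        rw [← Function.Injective.tsum_eq hinj hsupp]
        calc ∑' f : {f : ℕ // Powerful f ∧ omegaO f = m}, aFun z (f : ℕ)
            = ∑' f : {f : ℕ // Powerful f ∧ omegaO f = m},
                ((((f : ℕ) : ℝ)⁻¹ * ∏ p ∈ (f : ℕ).primeFactors, (1 + 1 / (p : ℝ))⁻¹ : ℝ) : ℂ)
                  * z ^ m := by
              refine tsum_congr fun f => ?_
              rw [aFun, if_pos f.2.1, f.2.2]
              push_cast
              ring
          _ = (∑' f : {f : ℕ // Powerful f ∧ omegaO f = m},
                ((((f : ℕ) : ℝ)⁻¹ * ∏ p ∈ (f : ℕ).primeFactors, (1 + 1 / (p : ℝ))⁻¹ : ℝ) : ℂ))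
                  * z ^ m := tsum_mul_right
          _ = ((∑' f : {f : ℕ // Powerful f ∧ omegaO f = m},
                (((f : ℕ) : ℝ)⁻¹ * ∏ p ∈ (f : ℕ).primeFactors, (1 + 1 / (p : ℝ))⁻¹) : ℝ) : ℂ)
                  * z ^ m := by rw [Complex.ofReal_tsum]
      rw [h1, riemannZeta_two, eOm]
      push_cast
      field_simp
    have hfunkey : (fun m : ℕ => (eOm m : ℂ) * z ^ m)
        = fun m : ℕ => (riemannZeta 2)⁻¹ * ∑' n : omegaO ⁻¹' {m}, aFun z n :=
      funext fun m => (key m).symm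
    rw [hfunkey]
    exact hmul
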